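/- Let s ≥ 1 and let w ∈ ℝ^s. Suppose that for every sign pattern η : {1, …, s} → {−1, +1} there exist a real number C_η > 0 and a vector v_η ∈ ℝ^s such that η_i · (C_η·w_i − (v_η)_i) > 0 for all i. Then w is a nonnegative real linear combination of the vectors {v_η : η a sign pattern}, i.e. w ∈ Σ_η ℝ_{≥0}·v_η. -/

import Mathlib

/-- If for every sign pattern `η` (encoded by `Fin s → Bool`) there are `C_η > 0`
and a vector `v_η` with `η_i · (C_η·w_i − (v_η)_i) > 0` for all `i`, then `w` lies
in the cone `Σ_η ℝ_{≥0}·v_η` (step in the proof of Theorem 4.7(a) of the paper). -/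
theorem stmt_10 (s : ℕ) (hs : 1 ≤ s) (w : Fin s → ℝ)
    (C : (Fin s → Bool) → ℝ) (v : (Fin s → Bool) → (Fin s → ℝ))
    (hC : ∀ η, 0 < C η)
    (hv : ∀ η i, 0 < (if η i then (1 : ℝ) else -1) * (C η * w i - v η i)) :
    ∃ c : (Fin s → Bool) → ℝ, (∀ η, 0 ≤ c η) ∧ w = ∑ η, c η • v η := by
  classical
  set e : (Fin s → Bool) → (Fin s → ℝ) := fun η i => C η * w i - v η i with he
  -- sign facts
  have hsign : ∀ η i, (η i = true → 0 < e η i) ∧ (η i = false → e η i < 0) := by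
    intro η i
    constructor
    · intro h
      have := hv η i
      rw [h] at this
      simpa [he] using this
    · intro h
      have := hv η i
      rw [h] at this
      simp only [if_neg Bool.false_ne_true] at this
      rw [neg_one_mul] at this
      simp only [he]; linarith
  -- e is injective
  have einj : Function.Injective e := by
    intro a b hab
    funext i
    by_contra hne
    have hei : e a i = e b i := by rw [hab]
    cases ha : a i <;> cases hb : b i
    · exact hne (ha.trans hb.symm)
    · have h1 := (hsign a i).2 ha
      have h2 := (hsign b i).1 hb
      linarith
    · have h1 := (hsign a i).1 ha
      have h2 := (hsign b i).2 hb
      linarith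
    · exact hne (ha.trans hb.symm)
  -- 0 lies in the convex hull of the e η, by separation
  have hmem : (0 : Fin s → ℝ) ∈ convexHull ℝ (Set.range e) := by
    by_contra h0
    obtain ⟨f, u, hfu, hsep⟩ :=
      geometric_hahn_banach_point_closed (convex_convexHull ℝ _)
        (Set.Finite.isCompact_convexHull ℝ (Set.finite_range e)).isClosed h0
    have hupos : 0 < u := by simpa using hfu
    set g : Fin s → ℝ := fun i => f (fun j => if i = j then (1 : ℝ) else 0) with hg
    set η : Fin s → Bool := fun i => decide (g i < 0) with hη
    have hfe : f (e η) = ∑ i, e η i * g i := by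
      have hx : e η = ∑ i, e η i • fun j => if i = j then (1 : ℝ) else 0 :=
        pi_eq_sum_univ (e η)
      rw [hx]
      rw [map_sum]
      refine Finset.sum_congr rfl fun i _ => ?_
      rw [f.map_smul]
      simp [hg, smul_eq_mul]
    have hle : f (e η) ≤ 0 := by
      rw [hfe]
      apply Finset.sum_nonpos
      intro i _
      by_cases hgi : g i < 0
      · have hηi : η i = true := by simp [hη, hgi]
        have := (hsign η i).1 hηi
        exact mul_nonpos_of_nonneg_of_nonpos this.le hgi.le
      · have hηi : η i = false := by simp [hη]; linarith
        have := (hsign η i).2 hηi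
        exact mul_nonpos_of_nonpos_of_nonneg this.le (not_lt.1 hgi)
    have := hsep (e η) (subset_convexHull ℝ _ (Set.mem_range_self η))
    linarith
  -- extract a convex combination
  rw [show Set.range e = ↑(Finset.univ.image e) by simp, Finset.convexHull_eq] at hmem
  obtain ⟨W, hW0, hW1, hWc⟩ := hmem
  rw [Finset.centerMass_eq_of_sum_1 _ _ hW1] at hWc
  set μ : (Fin s → Bool) → ℝ := fun η => W (e η) with hμ
  have hμ0 : ∀ η, 0 ≤ μ η := fun η => hW0 _ (Finset.mem_image_of_mem e (Finset.mem_univ η))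
  have hμ1 : ∑ η, μ η = 1 := by
    rw [← hW1, Finset.sum_image (fun a _ b _ h => einj h)]
  have hμe : ∑ η, μ η • e η = 0 := by
    rw [← hWc, Finset.sum_image (fun a _ b _ h => einj h)]
    simp
    rfl
  set t : ℝ := ∑ η, μ η * C η with ht
  have htpos : 0 < t := by
    have hex : ∃ η ∈ Finset.univ, 0 < μ η := by
      by_contra h
      push_neg at h
      have : (∑ η, μ η) ≤ 0 :=
        Finset.sum_nonpos fun η hη' => h η hη'
      linarith [hμ1]
    obtain ⟨η₀, _, hη₀⟩ := hex
    exact Finset.sum_pos' (fun η _ => mul_nonneg (hμ0 η) (hC η).le)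
      ⟨η₀, Finset.mem_univ η₀, mul_pos hη₀ (hC η₀)⟩
  refine ⟨fun η => μ η / t, fun η => div_nonneg (hμ0 η) htpos.le, ?_⟩
  funext i
  have hμei : ∑ η, μ η * e η i = 0 := by
    have := congrFun hμe i
    simpa [Finset.sum_apply] using this
  have hvi : ∀ η, v η i = C η * w i - e η i := by
    intro η; simp [he]
  simp only [Finset.sum_apply, Pi.smul_apply]
  have : ∑ η, (μ η / t) • v η i = ∑ η, ((μ η * C η) / t * w i - (μ η / t) * e η i) := by
    refine Finset.sum_congr rfl fun η _ => ?_
    rw [hvi η]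
    simp only [smul_eq_mul]
    ring
  rw [this, Finset.sum_sub_distrib]
  have h1 : ∑ η, (μ η * C η) / t * w i = w i := by
    rw [← Finset.sum_mul, ← Finset.sum_div, ← ht, div_self htpos.ne']
    ring
  have h2 : ∑ η, (μ η / t) * e η i = 0 := by
    have : ∑ η, (μ η / t) * e η i = (∑ η, μ η * e η i) / t := by
      rw [Finset.sum_div]
      refine Finset.sum_congr rfl fun η _ => ?_
      ring
    rw [this, hμei, zero_div]
  rw [h1, h2, sub_zero]
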